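/- Let F be a field and G = GL(4, F). With B the Borel, N its unipotent radical, and w_1, w_2, w_3 the simple reflections, suppose γ ∈ B w_1w_2w_3w_2w_1 N has Bruhat normal form γ = u_1 t w_1w_2w_3w_2w_1 u_2 where u_1 has (1,2)-entry a and u_2 has (1,2)-entry b. Set δ = w_1·n(−a), where n(−a) ∈ N_1 is the elementary unipotent with (1,2)-entry −a. Then δ γ δ^{-1} ∈ B w_2w_3w_2 N if a + b = 0, and δ γ δ^{-1} ∈ B w_2w_3w_2w_1 N if a + b ≠ 0. -/
import Mathlib

open Matrix
set_option maxHeartbeats 1000000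

variable {F : Type*} [Field F]

/-- The permutation matrix of `σ` (column convention). -/
def permM {n : ℕ} (F : Type*) [Field F] (σ : Equiv.Perm (Fin n)) :
    Matrix (Fin n) (Fin n) F :=
  Matrix.of fun i j => if σ j = i then 1 else 0

/-- `g` lies in the Borel subgroup `B` of upper triangular matrices. -/
def inB {n : ℕ} (g : GL (Fin n) F) : Prop :=
  ∀ i j : Fin n, j < i → (g : Matrix (Fin n) (Fin n) F) i j = 0

/-- `g` lies in the unipotent upper triangular subgroup `N`. -/
def inN {n : ℕ} (g : GL (Fin n) F) : Prop :=
  inB g ∧ ∀ i : Fin n, (g : Matrix (Fin n) (Fin n) F) i i = 1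

/-- The Bruhat cell `B·w·N`. -/
def cell {n : ℕ} (w : GL (Fin n) F) : Set (GL (Fin n) F) :=
  {γ | ∃ b u : GL (Fin n) F, inB b ∧ inN u ∧ γ = b * w * u}

/-- `g` is the elementary unipotent `n(c) ∈ N₁` with `(1,2)`-entry `c`
(0-based entry `(0,1)`), i.e. the identity except at that entry, where it is `c`. -/
def isElemN1 (g : GL (Fin 4) F) (c : F) : Prop :=
  (g : Matrix (Fin 4) (Fin 4) F) 0 1 = c ∧
    ∀ i j : Fin 4, ¬(i = 0 ∧ j = 1) →
      (g : Matrix (Fin 4) (Fin 4) F) i j = if i = j then 1 else 0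

/- ### Auxiliary lemmas -/

lemma my_inB_mul {n : ℕ} (g h : GL (Fin n) F) (hg : inB g) (hh : inB h) : inB (g * h) := by
  intro i j hij
  show (↑(g*h) : Matrix (Fin n) (Fin n) F) i j = 0
  rw [Units.val_mul, Matrix.mul_apply]
  apply Finset.sum_eq_zero
  intro k _
  by_cases hk : i ≤ k
  · rw [hh k j (lt_of_lt_of_le hij hk), mul_zero]
  · rw [hg i k (lt_of_not_ge hk), zero_mul]

lemma my_inN_mul {n : ℕ} (g h : GL (Fin n) F) (hg : inN g) (hh : inN h) : inN (g * h) := by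
  refine ⟨my_inB_mul g h hg.1 hh.1, fun i => ?_⟩
  show (↑(g*h) : Matrix (Fin n) (Fin n) F) i i = 1
  rw [Units.val_mul, Matrix.mul_apply, Finset.sum_eq_single i]
  · rw [hg.2 i, hh.2 i, one_mul]
  · intro k _ hk
    rcases lt_or_gt_of_ne hk with h1 | h1
    · rw [hg.1 i k h1, zero_mul]
    · rw [hh.1 k i h1, mul_zero]
  · intro h; exact absurd (Finset.mem_univ i) h

lemma my_inN_lit (g : GL (Fin 4) F) (p q r s u v : F)
    (hg : (↑g : Matrix (Fin 4) (Fin 4) F) = !![1,p,q,r;0,1,s,u;0,0,1,v;0,0,0,1]) : inN g := by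
  constructor
  · intro i j hij
    rw [hg]
    fin_cases i <;> fin_cases j <;>
      first | exact absurd hij (by decide) | simp [vecHead, vecTail]
  · intro i
    rw [hg]
    fin_cases i <;> simp

lemma my_conj_swap01_inN (w₁ g : GL (Fin 4) F)
    (hw : (↑w₁ : Matrix (Fin 4) (Fin 4) F) = !![0,1,0,0;1,0,0,0;0,0,1,0;0,0,0,1])
    (hg : inN g) (h01 : (↑g : Matrix (Fin 4) (Fin 4) F) 0 1 = 0) : inN (w₁ * g * w₁) := by
  have e : (↑(w₁*g*w₁) : Matrix (Fin 4) (Fin 4) F)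
      = !![0,1,0,0;1,0,0,0;0,0,1,0;0,0,0,1] * (g : Matrix (Fin 4) (Fin 4) F)
        * !![0,1,0,0;1,0,0,0;0,0,1,0;0,0,0,1] := by
    rw [Units.val_mul, Units.val_mul, hw]
  constructor
  · intro i j hij
    rw [e]
    fin_cases i <;> fin_cases j <;>
      first
        | exact absurd hij (by decide)
        | simp [Matrix.mul_apply, Matrix.vecMul, dotProduct, vecHead, vecTail,
            Fin.sum_univ_four, h01, hg.1 1 0 (by decide),
            hg.1 2 0 (by decide), hg.1 2 1 (by decide), hg.1 3 0 (by decide),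
            hg.1 3 1 (by decide), hg.1 3 2 (by decide)]
  · intro i
    rw [e]
    fin_cases i <;>
      simp [Matrix.mul_apply, Matrix.vecMul, dotProduct, vecHead, vecTail,
        Fin.sum_univ_four, hg.2 0, hg.2 1, hg.2 2, hg.2 3,
        hg.1 1 0 (by decide), hg.1 2 0 (by decide), hg.1 2 1 (by decide),
        hg.1 3 0 (by decide), hg.1 3 1 (by decide), hg.1 3 2 (by decide)]

lemma my_conj_swap01_inB_diag (w₁ t : GL (Fin 4) F)
    (hw : (↑w₁ : Matrix (Fin 4) (Fin 4) F) = !![0,1,0,0;1,0,0,0;0,0,1,0;0,0,0,1])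
    (ht : ∀ i j : Fin 4, i ≠ j → (↑t : Matrix (Fin 4) (Fin 4) F) i j = 0) :
    inB (w₁ * t * w₁) := by
  have e : (↑(w₁*t*w₁) : Matrix (Fin 4) (Fin 4) F)
      = !![0,1,0,0;1,0,0,0;0,0,1,0;0,0,0,1] * (t : Matrix (Fin 4) (Fin 4) F)
        * !![0,1,0,0;1,0,0,0;0,0,1,0;0,0,0,1] := by
    rw [Units.val_mul, Units.val_mul, hw]
  intro i j hij
  rw [e]
  fin_cases i <;> fin_cases j <;>
    first
      | exact absurd hij (by decide)
      | simp [Matrix.mul_apply, Matrix.vecMul, dotProduct, vecHead, vecTail,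
          Fin.sum_univ_four, ht 0 1 (by decide), ht 0 2 (by decide),
          ht 0 3 (by decide), ht 1 0 (by decide), ht 1 2 (by decide), ht 1 3 (by decide),
          ht 2 0 (by decide), ht 2 1 (by decide), ht 2 3 (by decide), ht 3 0 (by decide),
          ht 3 1 (by decide), ht 3 2 (by decide)]

/-- The elementary unipotent with `(0,1)` entry `a`, as a unit. -/
def elemGL (a : F) : GL (Fin 4) F :=
  ⟨!![1,a,0,0;0,1,0,0;0,0,1,0;0,0,0,1], !![1,-a,0,0;0,1,0,0;0,0,1,0;0,0,0,1],
    by ext i j; fin_cases i <;> fin_cases j <;>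
        simp [Matrix.mul_apply, Fin.sum_univ_four, Matrix.one_apply, vecHead, vecTail],
    by ext i j; fin_cases i <;> fin_cases j <;>
        simp [Matrix.mul_apply, Fin.sum_univ_four, Matrix.one_apply, vecHead, vecTail]⟩

lemma elemGL_val (a : F) :
    (elemGL a : Matrix (Fin 4) (Fin 4) F) = !![1,a,0,0;0,1,0,0;0,0,1,0;0,0,0,1] := rfl

lemma elemGL_inN (a : F) : inN (elemGL a) := my_inN_lit _ a 0 0 0 0 0 rfl

/-- The unipotent `Y` used in the generic case, together with its explicit inverse. -/
def YGL (c D E H : F) (hc : c ≠ 0) : GL (Fin 4) F :=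
  ⟨!![1, c⁻¹, D*c⁻¹, E*c⁻¹; 0,1,0,0; 0,0,1,H; 0,0,0,1],
   !![1, -c⁻¹, -(D*c⁻¹), (D*H-E)*c⁻¹; 0,1,0,0; 0,0,1,-H; 0,0,0,1],
   by
    ext i j
    fin_cases i <;> fin_cases j <;>
      simp [Matrix.mul_apply, Fin.sum_univ_four, Matrix.one_apply, vecHead, vecTail] <;>
      field_simp <;> ring,
   by
    ext i j
    fin_cases i <;> fin_cases j <;>
      simp [Matrix.mul_apply, Fin.sum_univ_four, Matrix.one_apply, vecHead, vecTail] <;>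
      field_simp <;> ring⟩

lemma YGL_val (c D E H : F) (hc : c ≠ 0) :
    (YGL c D E H hc : Matrix (Fin 4) (Fin 4) F)
      = !![1, c⁻¹, D*c⁻¹, E*c⁻¹; 0,1,0,0; 0,0,1,H; 0,0,0,1] := rfl

lemma YGL_inv_val (c D E H : F) (hc : c ≠ 0) :
    (((YGL c D E H hc)⁻¹ : GL (Fin 4) F) : Matrix (Fin 4) (Fin 4) F)
      = !![1, -c⁻¹, -(D*c⁻¹), (D*H-E)*c⁻¹; 0,1,0,0; 0,0,1,-H; 0,0,0,1] := rfl

lemma YGL_inN (c D E H : F) (hc : c ≠ 0) : inN (YGL c D E H hc) :=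
  my_inN_lit _ c⁻¹ (D*c⁻¹) (E*c⁻¹) 0 0 H rfl


/-- In `GL(4, F)`, let `γ ∈ B·w₁w₂w₃w₂w₁·N` have Bruhat normal form
`γ = u₁ t w₁w₂w₃w₂w₁ u₂` with `a` the `(1,2)`-entry of `u₁` and `b` the `(1,2)`-entry of
`u₂`.  Put `δ = w₁·n(−a)` with `n(−a) ∈ N₁`.  Then `δγδ⁻¹ ∈ B·w₂w₃w₂·N` if `a + b = 0` and
`δγδ⁻¹ ∈ B·w₂w₃w₂w₁·N` if `a + b ≠ 0`. -/
theorem bruhat_cell_w1w2w3w2w1_conjugation (w₁ w₂ w₃ : GL (Fin 4) F)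
    (hw₁ : (w₁ : Matrix (Fin 4) (Fin 4) F) = permM F (Equiv.swap 0 1))
    (hw₂ : (w₂ : Matrix (Fin 4) (Fin 4) F) = permM F (Equiv.swap 1 2))
    (hw₃ : (w₃ : Matrix (Fin 4) (Fin 4) F) = permM F (Equiv.swap 2 3))
    (γ u₁ t u₂ : GL (Fin 4) F) (hu₁ : inN u₁)
    (ht : ∀ i j : Fin 4, i ≠ j → (t : Matrix (Fin 4) (Fin 4) F) i j = 0)
    (hu₂ : inN u₂)
    (hγ : γ = u₁ * t * (w₁ * w₂ * w₃ * w₂ * w₁) * u₂)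
    (a b : F) (ha : a = (u₁ : Matrix (Fin 4) (Fin 4) F) 0 1)
    (hb : b = (u₂ : Matrix (Fin 4) (Fin 4) F) 0 1)
    (ν : GL (Fin 4) F) (hν : isElemN1 ν (-a)) :
    (a + b = 0 → (w₁ * ν) * γ * (w₁ * ν)⁻¹ ∈ cell (w₂ * w₃ * w₂)) ∧
    (a + b ≠ 0 → (w₁ * ν) * γ * (w₁ * ν)⁻¹ ∈ cell (w₂ * w₃ * w₂ * w₁)) := by
  have hw1m : (w₁ : Matrix (Fin 4) (Fin 4) F) = !![0,1,0,0;1,0,0,0;0,0,1,0;0,0,0,1] := by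
    rw [hw₁]; ext i j
    fin_cases i <;> fin_cases j <;> simp [permM, Equiv.swap_apply_def, vecHead, vecTail]
  have hw2m : (w₂ : Matrix (Fin 4) (Fin 4) F) = !![1,0,0,0;0,0,1,0;0,1,0,0;0,0,0,1] := by
    rw [hw₂]; ext i j
    fin_cases i <;> fin_cases j <;> simp [permM, Equiv.swap_apply_def, vecHead, vecTail]
  have hw3m : (w₃ : Matrix (Fin 4) (Fin 4) F) = !![1,0,0,0;0,1,0,0;0,0,0,1;0,0,1,0] := by
    rw [hw₃]; ext i j
    fin_cases i <;> fin_cases j <;> simp [permM, Equiv.swap_apply_def, vecHead, vecTail]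
  have hw11 : w₁ * w₁ = 1 := by
    apply Units.ext
    rw [Units.val_mul, hw1m, Units.val_one]
    ext i j
    fin_cases i <;> fin_cases j <;>
      simp [Matrix.mul_apply, Fin.sum_univ_four, Matrix.one_apply, vecHead, vecTail]
  have hw1inv : w₁⁻¹ = w₁ := inv_eq_of_mul_eq_one_right hw11
  -- the matrix of ν
  have hνm : (ν : Matrix (Fin 4) (Fin 4) F) = !![1,-a,0,0;0,1,0,0;0,0,1,0;0,0,0,1] := by
    have h2 := hν.2
    ext i j
    rcases eq_or_ne (i,j) (0,1) with h | h
    · rw [Prod.mk.injEq] at h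
      rw [h.1, h.2, hν.1]; norm_num
    · rw [h2 i j (by simpa [Prod.ext_iff] using h)]
      fin_cases i <;> fin_cases j <;> simp_all [vecHead, vecTail]
  have hνinv : ν⁻¹ = elemGL a := by
    apply inv_eq_of_mul_eq_one_right
    apply Units.ext
    rw [Units.val_mul, hνm, elemGL_val, Units.val_one]
    ext i j
    fin_cases i <;> fin_cases j <;>
      simp [Matrix.mul_apply, Fin.sum_univ_four, Matrix.one_apply, vecHead, vecTail]
  -- key identity
  have key : (w₁ * ν) * γ * (w₁ * ν)⁻¹
      = (w₁ * (ν * u₁) * w₁⁻¹) * ((w₁ * t * w₁) * (w₂ * w₃ * w₂ * w₁))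
        * ((u₂ * ν⁻¹) * w₁⁻¹) := by
    rw [hγ]; group
  rw [hw1inv, hνinv] at key
  -- entries of the two unipotent parts
  have hU₁N : inN (ν * u₁) := my_inN_mul _ _ ⟨by
      intro i j hij
      rw [hνm]
      fin_cases i <;> fin_cases j <;>
        first | exact absurd hij (by decide) | simp [vecHead, vecTail],
      by intro i; rw [hνm]; fin_cases i <;> simp⟩ hu₁
  have hU₁01 : (↑(ν * u₁) : Matrix (Fin 4) (Fin 4) F) 0 1 = 0 := by
    rw [Units.val_mul, hνm]
    simp [Matrix.mul_apply, Fin.sum_univ_four, vecHead, vecTail, hu₁.2 1,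
      hu₁.1 2 1 (by decide), hu₁.1 3 1 (by decide), ha.symm]
  have hUN : inN (u₂ * elemGL a) := my_inN_mul _ _ hu₂ (elemGL_inN a)
  have hU201 : (↑(u₂ * elemGL a) : Matrix (Fin 4) (Fin 4) F) 0 1 = a + b := by
    rw [Units.val_mul, elemGL_val]
    simp [Matrix.mul_apply, Fin.sum_univ_four, vecHead, vecTail, hu₂.2 0,
      hu₂.1 1 0 (by decide), hu₂.1 2 0 (by decide), hu₂.1 3 0 (by decide), hb.symm]
  constructor
  · -- case a + b = 0
    intro hc
    refine ⟨(w₁ * (ν * u₁) * w₁) * (w₁ * t * w₁), w₁ * (u₂ * elemGL a) * w₁,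
      my_inB_mul _ _ (my_conj_swap01_inN w₁ _ hw1m hU₁N hU₁01).1
        (my_conj_swap01_inB_diag w₁ t hw1m ht),
      my_conj_swap01_inN w₁ _ hw1m hUN (by rw [hU201]; exact hc), ?_⟩
    rw [key]
    simp only [mul_assoc]
  · -- case a + b ≠ 0
    intro hc
    obtain ⟨D, hD⟩ : ∃ x, (↑(u₂ * elemGL a) : Matrix (Fin 4) (Fin 4) F) 0 2 = x := ⟨_, rfl⟩
    obtain ⟨E, hE⟩ : ∃ x, (↑(u₂ * elemGL a) : Matrix (Fin 4) (Fin 4) F) 0 3 = x := ⟨_, rfl⟩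
    obtain ⟨Hh, hHh⟩ : ∃ x, (↑(u₂ * elemGL a) : Matrix (Fin 4) (Fin 4) F) 2 3 = x := ⟨_, rfl⟩
    obtain ⟨ff, hff⟩ : ∃ x, (↑(u₂ * elemGL a) : Matrix (Fin 4) (Fin 4) F) 1 2 = x := ⟨_, rfl⟩
    obtain ⟨gg, hgg⟩ : ∃ x, (↑(u₂ * elemGL a) : Matrix (Fin 4) (Fin 4) F) 1 3 = x := ⟨_, rfl⟩
    have hWm : (↑(w₂*w₃*w₂*w₁) : Matrix (Fin 4) (Fin 4) F)
        = !![0,1,0,0;0,0,0,1;0,0,1,0;1,0,0,0] := by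
      rw [Units.val_mul, Units.val_mul, Units.val_mul, hw1m, hw2m, hw3m]
      ext i j
      fin_cases i <;> fin_cases j <;>
        simp [Matrix.mul_apply, Fin.sum_univ_four, vecHead, vecTail]
    have hTT : (!![0,1,0,0;0,0,0,1;0,0,1,0;1,0,0,0] : Matrix (Fin 4) (Fin 4) F)
        * !![0,0,0,1;1,0,0,0;0,0,1,0;0,1,0,0] = 1 := by
      ext i j
      fin_cases i <;> fin_cases j <;>
        simp [Matrix.mul_apply, Fin.sum_univ_four, Matrix.one_apply, vecHead, vecTail]
    have hTT' : (!![0,0,0,1;1,0,0,0;0,0,1,0;0,1,0,0] : Matrix (Fin 4) (Fin 4) F)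
        * !![0,1,0,0;0,0,0,1;0,0,1,0;1,0,0,0] = 1 := by
      ext i j
      fin_cases i <;> fin_cases j <;>
        simp [Matrix.mul_apply, Fin.sum_univ_four, Matrix.one_apply, vecHead, vecTail]
    have hWinv : (↑((w₂*w₃*w₂*w₁)⁻¹) : Matrix (Fin 4) (Fin 4) F)
        = !![0,0,0,1;1,0,0,0;0,0,1,0;0,1,0,0] := by
      have h : (w₂*w₃*w₂*w₁)⁻¹
          = (⟨!![0,0,0,1;1,0,0,0;0,0,1,0;0,1,0,0],
              !![0,1,0,0;0,0,0,1;0,0,1,0;1,0,0,0], hTT', hTT⟩ : GL (Fin 4) F) := by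
        apply inv_eq_of_mul_eq_one_right
        apply Units.ext
        rw [Units.val_mul, Units.val_one, hWm]
        exact hTT
      rw [h]
    have hU₂m : (↑(u₂ * elemGL a) : Matrix (Fin 4) (Fin 4) F)
        = !![1, a+b, D, E; 0, 1, ff, gg; 0, 0, 1, Hh; 0, 0, 0, 1] := by
      ext i j
      fin_cases i <;> fin_cases j <;>
        simp [hU201, hD, hE, hHh, hff, hgg, hUN.2 0, hUN.2 1, hUN.2 2, hUN.2 3,
          hUN.1 1 0 (by decide), hUN.1 2 0 (by decide), hUN.1 2 1 (by decide),
          hUN.1 3 0 (by decide), hUN.1 3 1 (by decide), hUN.1 3 2 (by decide),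
          vecHead, vecTail]
    have hxval : (↑((u₂ * elemGL a) * w₁ * (YGL (a+b) D E Hh hc)⁻¹) : Matrix (Fin 4) (Fin 4) F)
        = !![1, a+b, D, E; 0, 1, ff, gg; 0, 0, 1, Hh; 0, 0, 0, 1]
          * !![0,1,0,0;1,0,0,0;0,0,1,0;0,0,0,1]
          * !![1, -(a+b)⁻¹, -(D*(a+b)⁻¹), (D*Hh-E)*(a+b)⁻¹;
               0,1,0,0; 0,0,1,-Hh; 0,0,0,1] := by
      rw [Units.val_mul, Units.val_mul, hw1m, YGL_inv_val, hU₂m]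
    have hconjB : inB ((w₂*w₃*w₂*w₁) * ((u₂ * elemGL a) * w₁ * (YGL (a+b) D E Hh hc)⁻¹) * (w₂*w₃*w₂*w₁)⁻¹) := by
      intro i j hij
      have e : (↑((w₂*w₃*w₂*w₁) * ((u₂ * elemGL a) * w₁ * (YGL (a+b) D E Hh hc)⁻¹) * (w₂*w₃*w₂*w₁)⁻¹)
          : Matrix (Fin 4) (Fin 4) F)
          = !![0,1,0,0;0,0,0,1;0,0,1,0;1,0,0,0]
            * ((↑((u₂ * elemGL a) * w₁ * (YGL (a+b) D E Hh hc)⁻¹) : Matrix (Fin 4) (Fin 4) F))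
            * !![0,0,0,1;1,0,0,0;0,0,1,0;0,1,0,0] := by
        rw [Units.val_mul, Units.val_mul, hWm, hWinv]
      rw [e, hxval]
      fin_cases i <;> fin_cases j <;>
        first
          | exact absurd hij (by decide)
          | (simp [Matrix.mul_apply, Fin.sum_univ_four, vecHead, vecTail]
             try field_simp
             try ring)
    refine ⟨(w₁ * (ν * u₁) * w₁) * (w₁ * t * w₁)
        * ((w₂*w₃*w₂*w₁) * ((u₂ * elemGL a) * w₁ * (YGL (a+b) D E Hh hc)⁻¹) * (w₂*w₃*w₂*w₁)⁻¹), (YGL (a+b) D E Hh hc),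
      my_inB_mul _ _ (my_inB_mul _ _ (my_conj_swap01_inN w₁ _ hw1m hU₁N hU₁01).1
        (my_conj_swap01_inB_diag w₁ t hw1m ht)) hconjB,
      YGL_inN _ _ _ _ hc, ?_⟩
    rw [key]
    group
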